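/- arXiv:1606.03476 — 3 statements merged into one kernel-verified Lean document; each statement's English description precedes it below -/
import Mathlib

section
/- If ρ, ρ' are occupancy-measure-like functions (nonnegative, positive row sums) inducing the same conditional policies, i.e. ρ(s,a)/Σ_{a'}ρ(s,a') = ρ'(s,a)/Σ_{a'}ρ'(s,a') for all s,a, then H̄(λρ + (1-λ)ρ') = λH̄(ρ) + (1-λ)H̄(ρ') for all λ ∈ [0,1]; conversely if the induced conditionals differ at some (s,a), the inequality is strict for λ ∈ (0,1). -/
open Real Finset

private lemma key_le (x x' y y' l : ℝ) (hx : 0 ≤ x) (hx' : 0 ≤ x') (hy : 0 < y) (hy' : 0 < y')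
    (hl : 0 < l) (hl2 : l < 1) :
    (l*x+(1-l)*x') * log ((l*x+(1-l)*x')/(l*y+(1-l)*y'))
      ≤ l * (x * log (x/y)) + (1-l) * (x' * log (x'/y')) := by
  have h1l : (0:ℝ) < 1 - l := by linarith
  have hB : 0 < l*y+(1-l)*y' := add_pos (mul_pos hl hy) (mul_pos h1l hy')
  set B := l*y+(1-l)*y' with hBdef
  have hw1 : 0 < l*y/B := div_pos (mul_pos hl hy) hB
  have hw2 : 0 < (1-l)*y'/B := div_pos (mul_pos h1l hy') hB
  have hwsum : l*y/B + (1-l)*y'/B = 1 := by rw [← add_div, div_self hB.ne']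
  have ht1 : x/y ∈ Set.Ici (0:ℝ) := Set.mem_Ici.2 (by positivity)
  have ht2 : x'/y' ∈ Set.Ici (0:ℝ) := Set.mem_Ici.2 (by positivity)
  have h := Real.convexOn_mul_log.2 ht1 ht2 hw1.le hw2.le hwsum
  simp only [smul_eq_mul] at h
  have hcomb : (l*y/B) * (x/y) + ((1-l)*y'/B) * (x'/y') = (l*x+(1-l)*x')/B := by
    field_simp
  rw [hcomb] at h
  have := mul_le_mul_of_nonneg_left h hB.le
  calc (l*x+(1-l)*x') * log ((l*x+(1-l)*x')/B)
      = B * ((l*x+(1-l)*x')/B * log ((l*x+(1-l)*x')/B)) := by field_simp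
    _ ≤ B * ((l*y/B) * (x/y * log (x/y)) + ((1-l)*y'/B) * (x'/y' * log (x'/y'))) := this
    _ = l * (x * log (x/y)) + (1-l) * (x' * log (x'/y')) := by field_simp

private lemma key_lt (x x' y y' l : ℝ) (hx : 0 ≤ x) (hx' : 0 ≤ x') (hy : 0 < y) (hy' : 0 < y')
    (hl : 0 < l) (hl2 : l < 1) (hne : x/y ≠ x'/y') :
    (l*x+(1-l)*x') * log ((l*x+(1-l)*x')/(l*y+(1-l)*y'))
      < l * (x * log (x/y)) + (1-l) * (x' * log (x'/y')) := by
  have h1l : (0:ℝ) < 1 - l := by linarith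
  have hB : 0 < l*y+(1-l)*y' := add_pos (mul_pos hl hy) (mul_pos h1l hy')
  set B := l*y+(1-l)*y' with hBdef
  have hw1 : 0 < l*y/B := div_pos (mul_pos hl hy) hB
  have hw2 : 0 < (1-l)*y'/B := div_pos (mul_pos h1l hy') hB
  have hwsum : l*y/B + (1-l)*y'/B = 1 := by rw [← add_div, div_self hB.ne']
  have ht1 : x/y ∈ Set.Ici (0:ℝ) := Set.mem_Ici.2 (by positivity)
  have ht2 : x'/y' ∈ Set.Ici (0:ℝ) := Set.mem_Ici.2 (by positivity)
  have h := Real.strictConvexOn_mul_log.2 ht1 ht2 hne hw1 hw2 hwsum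
  simp only [smul_eq_mul] at h
  have hcomb : (l*y/B) * (x/y) + ((1-l)*y'/B) * (x'/y') = (l*x+(1-l)*x')/B := by
    field_simp
  rw [hcomb] at h
  have := mul_lt_mul_of_pos_left h hB
  calc (l*x+(1-l)*x') * log ((l*x+(1-l)*x')/B)
      = B * ((l*x+(1-l)*x')/B * log ((l*x+(1-l)*x')/B)) := by field_simp
    _ < B * ((l*y/B) * (x/y * log (x/y)) + ((1-l)*y'/B) * (x'/y' * log (x'/y'))) := this
    _ = l * (x * log (x/y)) + (1-l) * (x' * log (x'/y')) := by field_simp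


/-- The entropy functional `H̄(ρ) = -Σ_{s,a} ρ(s,a)·log(ρ(s,a)/Σ_{a'} ρ(s,a'))`. -/
noncomputable def Hbar {S A : Type*} [Fintype S] [Fintype A] (ρ : S → A → ℝ) : ℝ :=
  -∑ s, ∑ a, ρ s a * log (ρ s a / ∑ a', ρ s a')

/-- Equality case of the concavity of `H̄`: if `ρ` and `ρ'` induce the same conditional
policies then `H̄` is affine along their segment; if the induced conditionals differ
somewhere, the concavity inequality is strict for `λ ∈ (0,1)`. -/
theorem Hbar_strict_concavity (S A : Type*) [Fintype S] [Fintype A] [Nonempty S] [Nonempty A]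
    (ρ ρ' : S → A → ℝ) (hρ : ∀ s a, 0 ≤ ρ s a) (hρ' : ∀ s a, 0 ≤ ρ' s a)
    (hrow : ∀ s, 0 < ∑ a', ρ s a') (hrow' : ∀ s, 0 < ∑ a', ρ' s a') :
    ((∀ s a, ρ s a / ∑ a', ρ s a' = ρ' s a / ∑ a', ρ' s a') →
      ∀ l : ℝ, 0 ≤ l → l ≤ 1 →
        Hbar (fun s a => l * ρ s a + (1 - l) * ρ' s a)
          = l * Hbar ρ + (1 - l) * Hbar ρ') ∧
    ((∃ s a, ρ s a / ∑ a', ρ s a' ≠ ρ' s a / ∑ a', ρ' s a') →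
      ∀ l : ℝ, 0 < l → l < 1 →
        l * Hbar ρ + (1 - l) * Hbar ρ'
          < Hbar (fun s a => l * ρ s a + (1 - l) * ρ' s a)) := by
  constructor
  · intro h l hl0 hl1
    have hM : ∀ s, (∑ a', (l * ρ s a' + (1 - l) * ρ' s a'))
        = l * ∑ a', ρ s a' + (1 - l) * ∑ a', ρ' s a' := fun s => by
      rw [Finset.sum_add_distrib, ← Finset.mul_sum, ← Finset.mul_sum]
    have hterm : ∀ s a,
        (l * ρ s a + (1 - l) * ρ' s a) *
            log ((l * ρ s a + (1 - l) * ρ' s a) / ∑ a', (l * ρ s a' + (1 - l) * ρ' s a'))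
          = l * (ρ s a * log (ρ s a / ∑ a', ρ s a'))
            + (1 - l) * (ρ' s a * log (ρ' s a / ∑ a', ρ' s a')) := by
      intro s a
      rw [hM s]
      have hR := hrow s
      have hR' := hrow' s
      have hMpos : 0 < l * ∑ a', ρ s a' + (1 - l) * ∑ a', ρ' s a' := by
        rcases eq_or_lt_of_le hl0 with h0 | h0
        · rw [← h0]; simpa using hR'
        · nlinarith [mul_pos h0 hR, mul_nonneg (by linarith : (0:ℝ) ≤ 1 - l) hR'.le]
      set p := ρ s a / ∑ a', ρ s a' with hp
      have h1 : ρ s a = p * ∑ a', ρ s a' := by rw [hp, div_mul_cancel₀ _ hR.ne']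
      have h2 : ρ' s a = p * ∑ a', ρ' s a' := by
        have := (h s a).symm
        rw [← hp] at this
        rw [← this, div_mul_cancel₀ _ hR'.ne']
      have h3 : ρ' s a / ∑ a', ρ' s a' = p := (h s a).symm
      have h4 : l * ρ s a + (1 - l) * ρ' s a
          = p * (l * ∑ a', ρ s a' + (1 - l) * ∑ a', ρ' s a') := by
        rw [h1, h2]; ring
      rw [h4, mul_div_assoc, div_self hMpos.ne', mul_one, h3, h1, h2]
      ring
    simp only [Hbar]
    calc -∑ s, ∑ a, (l * ρ s a + (1 - l) * ρ' s a) *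
            log ((l * ρ s a + (1 - l) * ρ' s a) / ∑ a', (l * ρ s a' + (1 - l) * ρ' s a'))
        = -∑ s, ∑ a, (l * (ρ s a * log (ρ s a / ∑ a', ρ s a'))
            + (1 - l) * (ρ' s a * log (ρ' s a / ∑ a', ρ' s a'))) := by
          congr 1; exact Finset.sum_congr rfl fun s _ =>
            Finset.sum_congr rfl fun a _ => hterm s a
      _ = l * -(∑ s, ∑ a, ρ s a * log (ρ s a / ∑ a', ρ s a'))
            + (1 - l) * -(∑ s, ∑ a, ρ' s a * log (ρ' s a / ∑ a', ρ' s a')) := by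
          simp only [Finset.sum_add_distrib, ← Finset.mul_sum]; ring
  · rintro ⟨s₀, a₀, hne⟩ l hl0 hl1
    have hM : ∀ s, (∑ a', (l * ρ s a' + (1 - l) * ρ' s a'))
        = l * ∑ a', ρ s a' + (1 - l) * ∑ a', ρ' s a' := fun s => by
      rw [Finset.sum_add_distrib, ← Finset.mul_sum, ← Finset.mul_sum]
    have hle : ∀ s a, (l * ρ s a + (1 - l) * ρ' s a) *
            log ((l * ρ s a + (1 - l) * ρ' s a) / ∑ a', (l * ρ s a' + (1 - l) * ρ' s a'))
          ≤ l * (ρ s a * log (ρ s a / ∑ a', ρ s a'))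
            + (1 - l) * (ρ' s a * log (ρ' s a / ∑ a', ρ' s a')) := fun s a => by
      rw [hM s]
      exact key_le _ _ _ _ _ (hρ s a) (hρ' s a) (hrow s) (hrow' s) hl0 hl1
    have hlt : (l * ρ s₀ a₀ + (1 - l) * ρ' s₀ a₀) *
            log ((l * ρ s₀ a₀ + (1 - l) * ρ' s₀ a₀) / ∑ a', (l * ρ s₀ a' + (1 - l) * ρ' s₀ a'))
          < l * (ρ s₀ a₀ * log (ρ s₀ a₀ / ∑ a', ρ s₀ a'))
            + (1 - l) * (ρ' s₀ a₀ * log (ρ' s₀ a₀ / ∑ a', ρ' s₀ a')) := by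
      rw [hM s₀]
      exact key_lt _ _ _ _ _ (hρ s₀ a₀) (hρ' s₀ a₀) (hrow s₀) (hrow' s₀) hl0 hl1 hne
    have key : ∑ s, ∑ a, (l * ρ s a + (1 - l) * ρ' s a) *
            log ((l * ρ s a + (1 - l) * ρ' s a) / ∑ a', (l * ρ s a' + (1 - l) * ρ' s a'))
        < ∑ s, ∑ a, (l * (ρ s a * log (ρ s a / ∑ a', ρ s a'))
            + (1 - l) * (ρ' s a * log (ρ' s a / ∑ a', ρ' s a'))) := by
      refine Finset.sum_lt_sum (fun s _ => Finset.sum_le_sum fun a _ => hle s a)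
        ⟨s₀, Finset.mem_univ s₀, Finset.sum_lt_sum (fun a _ => hle s₀ a)
          ⟨a₀, Finset.mem_univ a₀, hlt⟩⟩
    have heq : ∑ s, ∑ a, (l * (ρ s a * log (ρ s a / ∑ a', ρ s a'))
            + (1 - l) * (ρ' s a * log (ρ' s a / ∑ a', ρ' s a')))
        = l * (∑ s, ∑ a, ρ s a * log (ρ s a / ∑ a', ρ s a'))
          + (1 - l) * (∑ s, ∑ a, ρ' s a * log (ρ' s a / ∑ a', ρ' s a')) := by
      simp only [Finset.sum_add_distrib, ← Finset.mul_sum]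
    simp only [Hbar]
    rw [heq] at key
    linarith
end

section
/- Conversely, if ρ : S × A → ℝ is nonnegative and satisfies the Bellman flow constraints Σ_a ρ(s,a) = p₀(s) + γΣ_{s',a} P(s|s',a)ρ(s',a) for all s, with γ ∈ [0,1) and p₀ a probability distribution with full support, then the policy π_ρ(a|s) = ρ(s,a)/Σ_{a'}ρ(s,a') has occupancy measure exactly ρ, and it is the unique policy with this occupancy measure. -/
open Finset

variable {S A : Type*}

/-- The `t`-step state distribution `P(s_t = s | π)` under policy `π`, starting from `p₀`,
with transition kernel `P s' a s = P(s | s', a)`. -/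
noncomputable def stateDist [Fintype S] [Fintype A]
    (p₀ : S → ℝ) (P : S → A → S → ℝ) (π : S → A → ℝ) : ℕ → S → ℝ
  | 0 => p₀
  | t + 1 => fun s => ∑ s', ∑ a, P s' a s * π s' a * stateDist p₀ P π t s'

section Aux

variable [Fintype S] [Fintype A]
variable {p₀ : S → ℝ} {P : S → A → S → ℝ} {π : S → A → ℝ} {γ : ℝ}

lemma sd_nonneg (hp₀ : ∀ s, 0 ≤ p₀ s) (hP : ∀ s' a s, 0 ≤ P s' a s)
    (hπ : ∀ s a, 0 ≤ π s a) : ∀ t s, 0 ≤ stateDist p₀ P π t s := by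
  intro t
  induction t with
  | zero => exact hp₀
  | succ t ih =>
    intro s
    refine Finset.sum_nonneg fun s' _ => Finset.sum_nonneg fun a _ => ?_
    exact mul_nonneg (mul_nonneg (hP _ _ _) (hπ _ _)) (ih s')

lemma sd_sum (hp₀sum : ∑ s, p₀ s = 1) (hPsum : ∀ s' a, ∑ s, P s' a s = 1)
    (hπsum : ∀ s, ∑ a, π s a = 1) : ∀ t, ∑ s, stateDist p₀ P π t s = 1 := by
  intro t
  induction t with
  | zero => exact hp₀sum
  | succ t ih =>
    have : ∑ s, stateDist p₀ P π (t+1) s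
        = ∑ s', ∑ a, (∑ s, P s' a s) * (π s' a * stateDist p₀ P π t s') := by
      simp only [stateDist]
      rw [Finset.sum_comm]
      refine Finset.sum_congr rfl fun s' _ => ?_
      rw [Finset.sum_comm]
      refine Finset.sum_congr rfl fun a _ => ?_
      rw [Finset.sum_mul]
      refine Finset.sum_congr rfl fun s _ => by ring
    rw [this]
    simp only [hPsum, one_mul]
    have : ∑ s', ∑ a, π s' a * stateDist p₀ P π t s'
        = ∑ s', (∑ a, π s' a) * stateDist p₀ P π t s' := by
      refine Finset.sum_congr rfl fun s' _ => by rw [Finset.sum_mul]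
    rw [this]
    simp only [hπsum, one_mul, ih]

lemma sd_summable (hγ0 : 0 ≤ γ) (hγ1 : γ < 1)
    (hp₀ : ∀ s, 0 ≤ p₀ s) (hp₀sum : ∑ s, p₀ s = 1)
    (hP : ∀ s' a s, 0 ≤ P s' a s) (hPsum : ∀ s' a, ∑ s, P s' a s = 1)
    (hπ : ∀ s a, 0 ≤ π s a) (hπsum : ∀ s, ∑ a, π s a = 1) (s : S) :
    Summable (fun t => γ ^ t * stateDist p₀ P π t s) := by
  refine Summable.of_nonneg_of_le
    (fun t => mul_nonneg (pow_nonneg hγ0 t) (sd_nonneg hp₀ hP hπ t s))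
    (fun t => ?_) (summable_geometric_of_lt_one hγ0 hγ1)
  have h1 : stateDist p₀ P π t s ≤ 1 := by
    calc stateDist p₀ P π t s ≤ ∑ s', stateDist p₀ P π t s' :=
      Finset.single_le_sum (fun s' _ => sd_nonneg hp₀ hP hπ t s') (Finset.mem_univ s)
    _ = 1 := sd_sum hp₀sum hPsum hπsum t
  calc γ ^ t * stateDist p₀ P π t s ≤ γ ^ t * 1 :=
    mul_le_mul_of_nonneg_left h1 (pow_nonneg hγ0 t)
  _ = γ ^ t := mul_one _

lemma sd_fix (hγ0 : 0 ≤ γ) (hγ1 : γ < 1)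
    (hp₀ : ∀ s, 0 ≤ p₀ s) (hp₀sum : ∑ s, p₀ s = 1)
    (hP : ∀ s' a s, 0 ≤ P s' a s) (hPsum : ∀ s' a, ∑ s, P s' a s = 1)
    (hπ : ∀ s a, 0 ≤ π s a) (hπsum : ∀ s, ∑ a, π s a = 1) (s : S) :
    (∑' t, γ ^ t * stateDist p₀ P π t s)
      = p₀ s + γ * ∑ s', ∑ a, P s' a s * π s' a * (∑' t, γ ^ t * stateDist p₀ P π t s') := by
  have hsum : ∀ s', Summable (fun t => γ ^ t * stateDist p₀ P π t s') :=
    sd_summable hγ0 hγ1 hp₀ hp₀sum hP hPsum hπ hπsum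
  have hsum2 : ∀ (s' : S) (a : A),
      Summable (fun t => P s' a s * π s' a * (γ ^ t * stateDist p₀ P π t s')) :=
    fun s' a => (hsum s').mul_left _
  rw [Summable.tsum_eq_zero_add (hsum s)]
  simp only [pow_zero, one_mul]
  have h0 : stateDist p₀ P π 0 s = p₀ s := rfl
  rw [h0]
  congr 1
  have hstep : ∀ t : ℕ, γ ^ (t + 1) * stateDist p₀ P π (t + 1) s
      = γ * ∑ s', ∑ a, P s' a s * π s' a * (γ ^ t * stateDist p₀ P π t s') := by
    intro t
    have : stateDist p₀ P π (t + 1) s = ∑ s', ∑ a, P s' a s * π s' a * stateDist p₀ P π t s' := rfl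
    rw [this]
    simp only [Finset.mul_sum]
    refine Finset.sum_congr rfl fun s' _ => Finset.sum_congr rfl fun a _ => by ring
  calc (∑' t, γ ^ (t + 1) * stateDist p₀ P π (t + 1) s)
      = ∑' t, γ * ∑ s', ∑ a, P s' a s * π s' a * (γ ^ t * stateDist p₀ P π t s') :=
        tsum_congr hstep
    _ = γ * ∑' t, ∑ s', ∑ a, P s' a s * π s' a * (γ ^ t * stateDist p₀ P π t s') :=
        tsum_mul_left
    _ = γ * ∑ s', ∑ a, ∑' t, P s' a s * π s' a * (γ ^ t * stateDist p₀ P π t s') := by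
        congr 1
        rw [Summable.tsum_finsetSum (fun s' _ => summable_sum fun a _ => hsum2 s' a)]
        exact Finset.sum_congr rfl fun s' _ => Summable.tsum_finsetSum fun a _ => hsum2 s' a
    _ = γ * ∑ s', ∑ a, P s' a s * π s' a * (∑' t, γ ^ t * stateDist p₀ P π t s') := by
        congr 1
        exact Finset.sum_congr rfl fun s' _ => Finset.sum_congr rfl fun a _ => tsum_mul_left

end Aux

/-- The occupancy measure `ρ_π(s,a) = π(a|s)·Σ_t γᵗ P(s_t = s | π)`. -/
noncomputable def occ [Fintype S] [Fintype A]
    (p₀ : S → ℝ) (P : S → A → S → ℝ) (π : S → A → ℝ) (γ : ℝ) (s : S) (a : A) : ℝ :=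
  π s a * ∑' t : ℕ, γ ^ t * stateDist p₀ P π t s

/-- Theorem 2 of Syed et al. (2008): if a nonnegative `ρ` satisfies the Bellman flow
constraints, then the policy `π_ρ(a|s) = ρ(s,a)/Σ_{a'}ρ(s,a')` has occupancy measure
exactly `ρ`, and any policy whose occupancy measure is `ρ` equals `π_ρ`. -/
theorem bellman_flow_occ_unique [Fintype S] [Fintype A] [Nonempty S] [Nonempty A]
    (p₀ : S → ℝ) (P : S → A → S → ℝ) (γ : ℝ)
    (hγ0 : 0 ≤ γ) (hγ1 : γ < 1)
    (hp₀ : ∀ s, 0 < p₀ s) (hp₀sum : ∑ s, p₀ s = 1)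
    (hP : ∀ s' a s, 0 ≤ P s' a s) (hPsum : ∀ s' a, ∑ s, P s' a s = 1)
    (ρ : S → A → ℝ) (hρ : ∀ s a, 0 ≤ ρ s a)
    (hflow : ∀ s, ∑ a, ρ s a = p₀ s + γ * ∑ s', ∑ a, P s' a s * ρ s' a) :
    (∀ s a, occ p₀ P (fun s a => ρ s a / ∑ a', ρ s a') γ s a = ρ s a) ∧
    (∀ π' : S → A → ℝ, (∀ s a, 0 ≤ π' s a) → (∀ s, ∑ a, π' s a = 1) →
      (∀ s a, occ p₀ P π' γ s a = ρ s a) →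
      ∀ s a, π' s a = ρ s a / ∑ a', ρ s a') := by
  have hp₀' : ∀ s, 0 ≤ p₀ s := fun s => (hp₀ s).le
  -- positivity of the marginals
  have hBpos : ∀ s, 0 < ∑ a, ρ s a := by
    intro s
    rw [hflow s]
    refine add_pos_of_pos_of_nonneg (hp₀ s) (mul_nonneg hγ0 ?_)
    exact Finset.sum_nonneg fun s' _ => Finset.sum_nonneg fun a _ =>
      mul_nonneg (hP _ _ _) (hρ _ _)
  set π : S → A → ℝ := fun s a => ρ s a / ∑ a', ρ s a' with hπdef
  have hπ0 : ∀ s a, 0 ≤ π s a := fun s a => div_nonneg (hρ s a) (hBpos s).le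
  have hπsum : ∀ s, ∑ a, π s a = 1 := by
    intro s
    simp only [hπdef]
    rw [← Finset.sum_div, div_self (hBpos s).ne']
  have hπρ : ∀ s a, π s a * ∑ a', ρ s a' = ρ s a := by
    intro s a
    simp only [hπdef]
    exact div_mul_cancel₀ _ (hBpos s).ne'
  have hsum : ∀ s', Summable (fun t => γ ^ t * stateDist p₀ P π t s') :=
    sd_summable hγ0 hγ1 hp₀' hp₀sum hP hPsum hπ0 hπsum
  set F : S → ℝ := fun s => ∑' t, γ ^ t * stateDist p₀ P π t s with hFdef
  have hFfix : ∀ s, F s = p₀ s + γ * ∑ s', ∑ a, P s' a s * π s' a * F s' :=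
    fun s => sd_fix hγ0 hγ1 hp₀' hp₀sum hP hPsum hπ0 hπsum s
  have hBfix : ∀ s, (∑ a, ρ s a) = p₀ s + γ * ∑ s', ∑ a, P s' a s * π s' a * ∑ a', ρ s' a' := by
    intro s
    rw [hflow s]
    congr 2
    refine Finset.sum_congr rfl fun s' _ => Finset.sum_congr rfl fun a _ => ?_
    rw [mul_assoc, hπρ s' a]
  -- the difference g satisfies a contraction identity
  set g : S → ℝ := fun s => F s - ∑ a, ρ s a with hgdef
  have hg : ∀ s, g s = γ * ∑ s', ∑ a, P s' a s * π s' a * g s' := by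
    intro s
    have h1 : g s = γ * ((∑ s', ∑ a, P s' a s * π s' a * F s')
        - ∑ s', ∑ a, P s' a s * π s' a * ∑ a', ρ s' a') := by
      simp only [hgdef]
      rw [hFfix s, hBfix s]; ring
    rw [h1]
    congr 1
    rw [← Finset.sum_sub_distrib]
    refine Finset.sum_congr rfl fun s' _ => ?_
    rw [← Finset.sum_sub_distrib]
    refine Finset.sum_congr rfl fun a _ => ?_
    simp only [hgdef]; ring
  have hgT : ∑ s, |g s| ≤ γ * ∑ s', |g s'| := by
    calc ∑ s, |g s| = ∑ s, γ * |∑ s', ∑ a, P s' a s * π s' a * g s'| := by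
          refine Finset.sum_congr rfl fun s _ => ?_
          rw [hg s, abs_mul, abs_of_nonneg hγ0]
      _ ≤ ∑ s, γ * ∑ s', ∑ a, P s' a s * π s' a * |g s'| := by
          refine Finset.sum_le_sum fun s _ => mul_le_mul_of_nonneg_left ?_ hγ0
          calc |∑ s', ∑ a, P s' a s * π s' a * g s'|
              ≤ ∑ s', |∑ a, P s' a s * π s' a * g s'| := Finset.abs_sum_le_sum_abs _ _
            _ ≤ ∑ s', ∑ a, |P s' a s * π s' a * g s'| :=
                Finset.sum_le_sum fun s' _ => Finset.abs_sum_le_sum_abs _ _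
            _ = ∑ s', ∑ a, P s' a s * π s' a * |g s'| := by
                refine Finset.sum_congr rfl fun s' _ => Finset.sum_congr rfl fun a _ => ?_
                rw [abs_mul, abs_mul, abs_of_nonneg (hP s' a s), abs_of_nonneg (hπ0 s' a)]
      _ = γ * ∑ s, ∑ s', ∑ a, P s' a s * π s' a * |g s'| := by rw [← Finset.mul_sum]
      _ = γ * ∑ s', ∑ a, π s' a * |g s'| * ∑ s, P s' a s := by
          congr 1
          rw [Finset.sum_comm]
          refine Finset.sum_congr rfl fun s' _ => ?_
          rw [Finset.sum_comm]
          refine Finset.sum_congr rfl fun a _ => ?_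
          rw [Finset.mul_sum]
          exact Finset.sum_congr rfl fun s _ => by ring
      _ = γ * ∑ s', |g s'| := by
          congr 1
          refine Finset.sum_congr rfl fun s' _ => ?_
          simp only [hPsum, mul_one]
          rw [← Finset.sum_mul, hπsum, one_mul]
  have hT0 : ∑ s, |g s| = 0 := by
    have hnn : 0 ≤ ∑ s, |g s| := Finset.sum_nonneg fun s _ => abs_nonneg _
    nlinarith
  have hFB : ∀ s, F s = ∑ a, ρ s a := by
    intro s
    have := (Finset.sum_eq_zero_iff_of_nonneg (fun s _ => abs_nonneg (g s))).mp hT0 s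
      (Finset.mem_univ s)
    have hgs : g s = 0 := abs_eq_zero.mp this
    have := hgs
    simp only [hgdef] at this
    linarith
  constructor
  · intro s a
    show π s a * ∑' t, γ ^ t * stateDist p₀ P π t s = ρ s a
    have : (∑' t, γ ^ t * stateDist p₀ P π t s) = F s := rfl
    rw [this, hFB s, hπρ s a]
  · intro π' hπ'0 hπ'sum hocc' s a
    have hsum' : ∀ s', Summable (fun t => γ ^ t * stateDist p₀ P π' t s') :=
      sd_summable hγ0 hγ1 hp₀' hp₀sum hP hPsum hπ'0 hπ'sum
    have hF'pos : 0 < ∑' t, γ ^ t * stateDist p₀ P π' t s := by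
      have h0 : p₀ s = γ ^ 0 * stateDist p₀ P π' 0 s := by simp [stateDist]
      have hle : γ ^ 0 * stateDist p₀ P π' 0 s ≤ ∑' t, γ ^ t * stateDist p₀ P π' t s :=
        Summable.le_tsum (hsum' s) 0 fun t _ =>
          mul_nonneg (pow_nonneg hγ0 t) (sd_nonneg hp₀' hP hπ'0 t s)
      linarith [hp₀ s]
    have hF'B : (∑' t, γ ^ t * stateDist p₀ P π' t s) = ∑ a', ρ s a' := by
      have h1 : ∑ a', occ p₀ P π' γ s a' = ∑ a', ρ s a' :=
        Finset.sum_congr rfl fun a' _ => hocc' s a'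
      have h2 : ∑ a', occ p₀ P π' γ s a'
          = ∑' t, γ ^ t * stateDist p₀ P π' t s := by
        simp only [occ]
        rw [← Finset.sum_mul, hπ'sum, one_mul]
      rw [← h1, h2]
    rw [eq_div_iff (hBpos s).ne', ← hF'B]
    have := hocc' s a
    simp only [occ] at this
    exact this
end

section
/- Let φ : ℝ → ℝ be strictly decreasing and convex with range T' and let T = -T' be the range of -φ. Define g_φ(x) = -x + φ(-φ⁻¹(-x)) for x ∈ T and +∞ otherwise. Then g_φ is convex. -/
open Classical in
/-- Given a strictly decreasing convex `φ : ℝ → ℝ`, the function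
`g_φ(x) = -x + φ(-φ⁻¹(-x))` for `x` in the range `T` of `-φ`, and `+∞` otherwise. -/
noncomputable def gPhi (φ : ℝ → ℝ) : ℝ → EReal := fun x =>
  if x ∈ Set.range (fun y => -φ y) then
    ((-x + φ (-(Function.invFun φ (-x))) : ℝ) : EReal)
  else ⊤

lemma gPhi_mul_ne_bot (φ : ℝ → ℝ) (c y : ℝ) (hc : 0 < c) :
    (c : EReal) * gPhi φ y ≠ ⊥ := by
  unfold gPhi
  split
  · rw [← EReal.coe_mul]; exact EReal.coe_ne_bot _
  · rw [EReal.coe_mul_top_of_pos hc]; simp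

/-- If `φ` is strictly decreasing and convex, then `g_φ` is convex
(as an extended-real-valued function on ℝ). -/
theorem gPhi_convex (φ : ℝ → ℝ) (hmono : StrictAnti φ)
    (hconv : ConvexOn ℝ Set.univ φ) :
    ∀ x y : ℝ, ∀ a b : ℝ, 0 ≤ a → 0 ≤ b → a + b = 1 →
      gPhi φ (a * x + b * y) ≤ (a : EReal) * gPhi φ x + (b : EReal) * gPhi φ y := by
  have hinj : Function.Injective φ := hmono.injective
  have hcont : Continuous φ := by
    have := hconv.continuousOn isOpen_univ
    rwa [continuousOn_univ] at this
  intro x y a b ha hb hab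
  rcases ha.eq_or_lt with rfl | ha'
  · have hb1 : b = 1 := by linarith
    subst hb1
    simp
  rcases hb.eq_or_lt with rfl | hb'
  · have ha1 : a = 1 := by linarith
    subst ha1
    simp
  by_cases hx : x ∈ Set.range (fun y => -φ y)
  · by_cases hy : y ∈ Set.range (fun y => -φ y)
    · -- main case
      obtain ⟨u, hu⟩ := hx
      obtain ⟨v, hv⟩ := hy
      simp only at hu hv
      have hz : a * x + b * y ∈ Set.range (fun y => -φ y) := by
        rcases le_total x y with hxy | hxy
        · refine intermediate_value_univ u v hcont.neg ?_
          rw [Pi.neg_apply, Pi.neg_apply, hu, hv]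
          have e1 : a * x + b * y - x = b * (y - x) := by
            have haa : a = 1 - b := by linarith
            rw [haa]; ring
          have e2 : y - (a * x + b * y) = a * (y - x) := by
            have hbb : b = 1 - a := by linarith
            rw [hbb]; ring
          constructor <;>
            linarith [mul_nonneg hb (sub_nonneg.2 hxy), mul_nonneg ha (sub_nonneg.2 hxy)]
        · refine intermediate_value_univ v u hcont.neg ?_
          rw [Pi.neg_apply, Pi.neg_apply, hu, hv]
          have e1 : x - (a * x + b * y) = b * (x - y) := by
            have haa : a = 1 - b := by linarith
            rw [haa]; ring
          have e2 : a * x + b * y - y = a * (x - y) := by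
            have hbb : b = 1 - a := by linarith
            rw [hbb]; ring
          constructor <;>
            linarith [mul_nonneg hb (sub_nonneg.2 hxy), mul_nonneg ha (sub_nonneg.2 hxy)]
      obtain ⟨w, hw⟩ := hz
      simp only at hw
      have hiu : Function.invFun φ (-x) = u := by
        rw [show -x = φ u by linarith]
        exact Function.leftInverse_invFun hinj u
      have hiv : Function.invFun φ (-y) = v := by
        rw [show -y = φ v by linarith]
        exact Function.leftInverse_invFun hinj v
      have hiw : Function.invFun φ (-(a * x + b * y)) = w := by
        rw [show -(a * x + b * y) = φ w by linarith]
        exact Function.leftInverse_invFun hinj w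
      have hzm : a * x + b * y ∈ Set.range (fun y => -φ y) := ⟨w, hw⟩
      have hxm : x ∈ Set.range (fun y => -φ y) := ⟨u, hu⟩
      have hym : y ∈ Set.range (fun y => -φ y) := ⟨v, hv⟩
      have Ez : gPhi φ (a * x + b * y)
          = ((-(a * x + b * y) + φ (-(Function.invFun φ (-(a * x + b * y)))) : ℝ) : EReal) := by
        rw [gPhi, if_pos hzm]
      have Ex : gPhi φ x = ((-x + φ (-(Function.invFun φ (-x))) : ℝ) : EReal) := by
        rw [gPhi, if_pos hxm]
      have Ey : gPhi φ y = ((-y + φ (-(Function.invFun φ (-y))) : ℝ) : EReal) := by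
        rw [gPhi, if_pos hym]
      rw [Ez, Ex, Ey, hiu, hiv, hiw,
        ← EReal.coe_mul, ← EReal.coe_mul, ← EReal.coe_add, EReal.coe_le_coe_iff]
      -- the real inequality
      have h1 : φ (a * u + b * v) ≤ a * φ u + b * φ v := by
        have := hconv.2 (Set.mem_univ u) (Set.mem_univ v) ha hb hab
        simpa [smul_eq_mul] using this
      have hwle : w ≤ a * u + b * v := by
        rw [← hmono.le_iff_ge]
        have hφw : φ w = a * φ u + b * φ v := by
          have h : -φ w = a * -φ u + b * -φ v := by rw [hu, hv, hw]
          linarith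
        linarith
      have h2 : φ (-w) ≤ φ (a * (-u) + b * (-v)) := by
        apply hmono.antitone
        linarith
      have h3 : φ (a * (-u) + b * (-v)) ≤ a * φ (-u) + b * φ (-v) := by
        have := hconv.2 (Set.mem_univ (-u)) (Set.mem_univ (-v)) ha hb hab
        simpa [smul_eq_mul] using this
      nlinarith
    · have hyt : gPhi φ y = ⊤ := by rw [gPhi, if_neg hy]
      rw [hyt, EReal.coe_mul_top_of_pos hb', EReal.add_top_of_ne_bot
        (gPhi_mul_ne_bot φ a x ha')]
      exact le_top
  · have hxt : gPhi φ x = ⊤ := by rw [gPhi, if_neg hx]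
    rw [hxt, EReal.coe_mul_top_of_pos ha', EReal.top_add_of_ne_bot
      (gPhi_mul_ne_bot φ b y hb')]
    exact le_top
end
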